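/- arXiv:2405.11626 — 3 statements merged into one kernel-verified Lean document; each statement's English description precedes it below -/
import Mathlib

section
/- For two absolutely continuous probability measures μ and ν on ℝ with finite second moments, the squared 2-Wasserstein distance equals the integral over t ∈ (0,1) of (F_μ^{-1}(t) - F_ν^{-1}(t))², where F_μ^{-1} and F_ν^{-1} are the quantile functions of μ and ν. -/
open MeasureTheory ProbabilityTheory
open scoped ENNReal

/-- Quantile (generalized inverse of the CDF) of a measure on ℝ. -/
noncomputable def quantile (μ : Measure ℝ) (t : ℝ) : ℝ := sInf {x | t ≤ cdf μ x}

/-- Squared 2-Wasserstein distance, as infimum over couplings. -/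
noncomputable def W2sq (μ ν : Measure ℝ) : ℝ≥0∞ :=
  ⨅ γ ∈ {γ : Measure (ℝ × ℝ) |
      γ.map Prod.fst = μ ∧ γ.map Prod.snd = ν},
    ∫⁻ p : ℝ × ℝ, ENNReal.ofReal ((p.1 - p.2) ^ 2) ∂γ

open Set Filter Topology

section basic
variable (μ : Measure ℝ) [IsProbabilityMeasure μ]

lemma quantile_set_nonempty {u : ℝ} (hu : u < 1) : {x | u ≤ cdf μ x}.Nonempty := by
  have h := (tendsto_cdf_atTop μ).eventually (eventually_ge_nhds hu)
  exact h.exists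

lemma quantile_set_bddBelow {u : ℝ} (hu : 0 < u) : BddBelow {x | u ≤ cdf μ x} := by
  have h := (tendsto_cdf_atBot μ).eventually (eventually_lt_nhds hu)
  obtain ⟨z, hz⟩ := h.exists
  refine ⟨z, fun y hy => ?_⟩
  by_contra hzy
  push_neg at hzy
  exact absurd (hy.trans (monotone_cdf μ hzy.le)) (not_le.2 hz)

lemma quantile_le_iff {u : ℝ} (hu0 : 0 < u) (hu1 : u < 1) (x : ℝ) :
    quantile μ u ≤ x ↔ u ≤ cdf μ x := by
  constructor
  · intro h
    have key : ∀ ε > (0:ℝ), u ≤ cdf μ (x + ε) := by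
      intro ε hε
      obtain ⟨y, hy, hylt⟩ := Real.lt_sInf_add_pos (quantile_set_nonempty μ hu1) hε
      have h' : sInf {x | u ≤ cdf μ x} ≤ x := h
      exact hy.trans (monotone_cdf μ (by linarith))
    have hseq : Tendsto (fun n : ℕ => cdf μ (x + 1/(n+1))) atTop (𝓝 (cdf μ x)) := by
      have hx : Tendsto (fun n : ℕ => x + 1/(n+1)) atTop (𝓝[Ici x] x) := by
        rw [tendsto_nhdsWithin_iff]
        constructor
        · simpa using (tendsto_const_nhds.add tendsto_one_div_add_atTop_nhds_zero_nat :
            Tendsto (fun n : ℕ => x + 1/((n:ℝ)+1)) atTop (𝓝 (x + 0)))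
        · exact Eventually.of_forall fun n => by
            have : (0:ℝ) < 1/(n+1) := by positivity
            simp only [mem_Ici]; linarith
      exact ((cdf μ).right_continuous x).tendsto.comp hx
    exact ge_of_tendsto hseq (Eventually.of_forall fun n => key _ (by positivity))
  · intro h
    exact csInf_le (quantile_set_bddBelow μ hu0) h

end basic

section push
variable (μ : Measure ℝ) [IsProbabilityMeasure μ]

lemma monotoneOn_quantile : MonotoneOn (quantile μ) (Ioo 0 1) := by
  intro u hu v hv huv
  exact csInf_le_csInf (quantile_set_bddBelow μ hu.1)
    (quantile_set_nonempty μ hv.2)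
    (fun x hx => le_trans huv hx)

lemma aemeasurable_quantile : AEMeasurable (quantile μ) (volume.restrict (Ioo 0 1)) :=
  aemeasurable_restrict_of_monotoneOn measurableSet_Ioo (monotoneOn_quantile μ)

lemma quantile_preimage_Iic (x : ℝ) :
    volume ({u | quantile μ u ≤ x} ∩ Ioo 0 1) = ENNReal.ofReal (cdf μ x) := by
  have h0 : 0 ≤ cdf μ x := cdf_nonneg μ x
  have h1 : cdf μ x ≤ 1 := cdf_le_one μ x
  apply le_antisymm
  · refine le_trans (measure_mono (fun u hu => ?_)) (le_of_eq (by rw [Real.volume_Ioc, sub_zero]))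
    rcases hu with ⟨hq, hu0, hu1⟩
    exact ⟨hu0, (quantile_le_iff μ hu0 hu1 x).1 hq⟩
  · have hsub : Ioo 0 (min (cdf μ x) 1) ⊆ {u | quantile μ u ≤ x} ∩ Ioo 0 1 := by
      intro u hu
      have hu0 : 0 < u := hu.1
      have huc : u < cdf μ x := lt_of_lt_of_le hu.2 (min_le_left _ _)
      have hu1 : u < 1 := lt_of_lt_of_le hu.2 (min_le_right _ _)
      exact ⟨(quantile_le_iff μ hu0 hu1 x).2 huc.le, hu0, hu1⟩
    calc ENNReal.ofReal (cdf μ x) = volume (Ioo 0 (min (cdf μ x) 1)) := by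
          rw [Real.volume_Ioo, min_eq_left h1, sub_zero]
      _ ≤ _ := measure_mono hsub

lemma map_quantile : (volume.restrict (Ioo (0:ℝ) 1)).map (quantile μ) = μ := by
  have hmeas := aemeasurable_quantile μ
  haveI : IsFiniteMeasure ((volume.restrict (Ioo (0:ℝ) 1)).map (quantile μ)) := by
    constructor
    rw [Measure.map_apply_of_aemeasurable hmeas MeasurableSet.univ]
    simp [Real.volume_Ioo]
  refine Measure.ext_of_Iic _ _ (fun x => ?_)
  rw [Measure.map_apply_of_aemeasurable hmeas measurableSet_Iic,
    Measure.restrict_apply' measurableSet_Ioo]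
  rw [← ofReal_cdf μ x, ← quantile_preimage_Iic μ x]
  rfl

lemma cdf_le_of_forall_lt (hμac : μ ≪ volume) {t u : ℝ} (h : ∀ x < t, cdf μ x < u) :
    cdf μ t ≤ u := by
  have hu0 : 0 < u := lt_of_le_of_lt (cdf_nonneg μ (t-1)) (h (t-1) (by linarith))
  have hIic : μ (Iic t) = μ (Iio t) := by
    have hsing : μ {t} = 0 := hμac (Real.volume_singleton)
    have : Iic t = Iio t ∪ {t} := by
      ext y; simp [le_iff_lt_or_eq]
    rw [this]
    refine le_antisymm (le_trans (measure_union_le _ _) (by rw [hsing, add_zero])) (measure_mono subset_union_left)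
  have hunion : Iio t = ⋃ n : ℕ, Iic (t - 1/(n+1)) := by
    ext y
    simp only [mem_Iio, mem_iUnion, mem_Iic]
    constructor
    · intro hy
      obtain ⟨n, hn⟩ := exists_nat_one_div_lt (sub_pos.2 hy)
      exact ⟨n, by linarith⟩
    · rintro ⟨n, hn⟩
      have : (0:ℝ) < 1/(n+1) := by positivity
      linarith
  have hmono : Monotone (fun n : ℕ => Iic (t - 1/(n+1))) := by
    intro m n hmn
    apply Iic_subset_Iic.2
    have h1 : (1:ℝ)/(n+1) ≤ 1/(m+1) := by
      apply one_div_le_one_div_of_le (by positivity)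
      exact_mod_cast by omega
    linarith
  have : μ (Iio t) = ⨆ n : ℕ, μ (Iic (t - 1/(n+1))) := by
    rw [hunion]; exact hmono.measure_iUnion
  have hle : μ (Iic t) ≤ ENNReal.ofReal u := by
    rw [hIic, this]
    refine iSup_le fun n => ?_
    rw [← ofReal_cdf μ]
    exact ENNReal.ofReal_le_ofReal (h _ (by nlinarith [show (0:ℝ) < 1/(n+1) from by positivity])).le
  rw [← ofReal_cdf μ t] at hle
  exact (ENNReal.ofReal_le_ofReal_iff hu0.le).1 hle

end push

section cost

noncomputable def slices (γ : Measure (ℝ × ℝ)) (q : ℝ × ℝ) : ℝ≥0∞ :=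
  γ {p | p.2 ≤ q.1 ∧ q.1 < q.2 ∧ q.2 ≤ p.1} + γ {p | p.1 ≤ q.1 ∧ q.1 < q.2 ∧ q.2 ≤ p.2}

lemma triangle_area {x y : ℝ} (hyx : y ≤ x) :
    volume {q : ℝ × ℝ | y ≤ q.1 ∧ q.1 < q.2 ∧ q.2 ≤ x} = ENNReal.ofReal ((x - y)^2/2) := by
  have hA : MeasurableSet {q : ℝ × ℝ | y ≤ q.1 ∧ q.1 < q.2 ∧ q.2 ≤ x} := by
    refine (measurableSet_le measurable_const measurable_fst).inter
      ((measurableSet_lt measurable_fst measurable_snd).inter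
      (measurableSet_le measurable_snd measurable_const))
  rw [Measure.volume_eq_prod]
  rw [Measure.prod_apply hA]
  have hslice : ∀ s : ℝ, volume (Prod.mk s ⁻¹' {q : ℝ × ℝ | y ≤ q.1 ∧ q.1 < q.2 ∧ q.2 ≤ x})
      = Set.indicator (Ici y) (fun s => ENNReal.ofReal (x - s)) s := by
    intro s
    by_cases hs : y ≤ s
    · have : Prod.mk s ⁻¹' {q : ℝ × ℝ | y ≤ q.1 ∧ q.1 < q.2 ∧ q.2 ≤ x} = Ioc s x := by
        ext t; simp [hs, and_comm]
      rw [this, Real.volume_Ioc, Set.indicator_of_mem (show s ∈ Ici y from hs)]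
    · have : Prod.mk s ⁻¹' {q : ℝ × ℝ | y ≤ q.1 ∧ q.1 < q.2 ∧ q.2 ≤ x} = ∅ := by
        ext t; simp [hs]
      rw [this, measure_empty, Set.indicator_of_notMem (show s ∉ Ici y from hs)]
  rw [lintegral_congr hslice, lintegral_indicator measurableSet_Ici _]
  have h1 : ∫⁻ s in Ici y, ENNReal.ofReal (x - s) = ∫⁻ s in Ioi y, ENNReal.ofReal (x - s) := by
    rw [Measure.restrict_congr_set Ioi_ae_eq_Ici.symm]
  rw [h1, ← Ioc_union_Ioi_eq_Ioi hyx,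
    lintegral_union measurableSet_Ioi (Ioc_disjoint_Ioi le_rfl)]
  have h2 : ∫⁻ s in Ioi x, ENNReal.ofReal (x - s) = 0 := by
    rw [setLIntegral_congr_fun measurableSet_Ioi
      (fun s (hs : x < s) => by
        rw [ENNReal.ofReal_eq_zero.2 (by linarith)]), lintegral_zero]
  rw [h2, add_zero]
  have hint : IntegrableOn (fun s => x - s) (Ioc y x) volume := by
    apply Continuous.integrableOn_Ioc
    continuity
  rw [← ofReal_integral_eq_lintegral_ofReal hint
    ((ae_restrict_iff' measurableSet_Ioc).2 (ae_of_all _ fun s hs => by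
      simp only [Pi.zero_apply]; linarith [hs.2]))]
  congr 1
  rw [← intervalIntegral.integral_of_le hyx]
  have : ∫ s in y..x, (x - s) = ∫ s in y..x, ((x:ℝ) - s) := rfl
  rw [intervalIntegral.integral_sub intervalIntegrable_const intervalIntegral.intervalIntegrable_id,
    intervalIntegral.integral_const, integral_id, smul_eq_mul]
  ring

lemma area_pair (x y : ℝ) :
    volume {q : ℝ × ℝ | (y ≤ q.1 ∧ q.1 < q.2 ∧ q.2 ≤ x) ∨ (x ≤ q.1 ∧ q.1 < q.2 ∧ q.2 ≤ y)}
      = ENNReal.ofReal ((x - y)^2/2) := by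
  rcases le_total y x with h | h
  · have : {q : ℝ × ℝ | (y ≤ q.1 ∧ q.1 < q.2 ∧ q.2 ≤ x) ∨ (x ≤ q.1 ∧ q.1 < q.2 ∧ q.2 ≤ y)}
        = {q : ℝ × ℝ | y ≤ q.1 ∧ q.1 < q.2 ∧ q.2 ≤ x} := by
      ext q
      simp only [mem_setOf_eq, or_iff_left_iff_imp]
      rintro ⟨h1, h2, h3⟩
      linarith
    rw [this, triangle_area h]
  · have : {q : ℝ × ℝ | (y ≤ q.1 ∧ q.1 < q.2 ∧ q.2 ≤ x) ∨ (x ≤ q.1 ∧ q.1 < q.2 ∧ q.2 ≤ y)}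
        = {q : ℝ × ℝ | x ≤ q.1 ∧ q.1 < q.2 ∧ q.2 ≤ y} := by
      ext q
      simp only [mem_setOf_eq, or_iff_right_iff_imp]
      rintro ⟨h1, h2, h3⟩
      linarith
    rw [this, triangle_area h]
    congr 1
    ring

end cost

section costeq

lemma slice_sets_measurable (q : ℝ × ℝ) :
    MeasurableSet {p : ℝ × ℝ | p.2 ≤ q.1 ∧ q.1 < q.2 ∧ q.2 ≤ p.1} ∧
    MeasurableSet {p : ℝ × ℝ | p.1 ≤ q.1 ∧ q.1 < q.2 ∧ q.2 ≤ p.2} := by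
  constructor
  · exact (measurableSet_le measurable_snd measurable_const).inter
      ((MeasurableSet.const _).inter (measurableSet_le measurable_const measurable_fst))
  · exact (measurableSet_le measurable_fst measurable_const).inter
      ((MeasurableSet.const _).inter (measurableSet_le measurable_const measurable_snd))

lemma cost_eq (γ : Measure (ℝ × ℝ)) [IsFiniteMeasure γ] :
    ∫⁻ p : ℝ × ℝ, ENNReal.ofReal ((p.1 - p.2) ^ 2) ∂γ = 2 * ∫⁻ q : ℝ × ℝ, slices γ q := by
  set A : Set ((ℝ × ℝ) × (ℝ × ℝ)) :=
    {r | (r.1.2 ≤ r.2.1 ∧ r.2.1 < r.2.2 ∧ r.2.2 ≤ r.1.1) ∨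
         (r.1.1 ≤ r.2.1 ∧ r.2.1 < r.2.2 ∧ r.2.2 ≤ r.1.2)} with hA_def
  have m12 : Measurable fun r : (ℝ × ℝ) × (ℝ × ℝ) => r.1.2 := measurable_fst.snd
  have m11 : Measurable fun r : (ℝ × ℝ) × (ℝ × ℝ) => r.1.1 := measurable_fst.fst
  have m21 : Measurable fun r : (ℝ × ℝ) × (ℝ × ℝ) => r.2.1 := measurable_snd.fst
  have m22 : Measurable fun r : (ℝ × ℝ) × (ℝ × ℝ) => r.2.2 := measurable_snd.snd
  have hA : MeasurableSet A := by
    refine MeasurableSet.union ?_ ?_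
    · exact (measurableSet_le m12 m21).inter ((measurableSet_lt m21 m22).inter
        (measurableSet_le m22 m11))
    · exact (measurableSet_le m11 m21).inter ((measurableSet_lt m21 m22).inter
        (measurableSet_le m22 m12))
  have hL : (γ.prod volume) A = ∫⁻ p : ℝ × ℝ, ENNReal.ofReal ((p.1 - p.2)^2/2) ∂γ := by
    rw [Measure.prod_apply hA]
    refine lintegral_congr fun p => ?_
    have : Prod.mk p ⁻¹' A =
        {q : ℝ × ℝ | (p.2 ≤ q.1 ∧ q.1 < q.2 ∧ q.2 ≤ p.1) ∨
          (p.1 ≤ q.1 ∧ q.1 < q.2 ∧ q.2 ≤ p.2)} := rfl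
    rw [this, area_pair]
  have hR : (γ.prod volume) A = ∫⁻ q : ℝ × ℝ, slices γ q := by
    rw [Measure.prod_apply_symm hA]
    refine lintegral_congr fun q => ?_
    have hpre : (fun p : ℝ × ℝ => (p, q)) ⁻¹' A =
        {p : ℝ × ℝ | p.2 ≤ q.1 ∧ q.1 < q.2 ∧ q.2 ≤ p.1} ∪
        {p : ℝ × ℝ | p.1 ≤ q.1 ∧ q.1 < q.2 ∧ q.2 ≤ p.2} := rfl
    rw [hpre, measure_union (Set.disjoint_left.2 (by
      rintro p ⟨h1, hst, h2⟩ ⟨h3, -, h4⟩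
      exact absurd (h2.trans h3) (not_le.2 hst))) (slice_sets_measurable q).2]
    rfl
  rw [← hR, hL, ← lintegral_const_mul 2 (by
    exact (ENNReal.measurable_ofReal.comp ((measurable_fst.sub measurable_snd).pow_const 2 |>.div_const 2)))]
  refine lintegral_congr fun p => ?_
  rw [← ENNReal.ofReal_ofNat 2, ← ENNReal.ofReal_mul (by norm_num)]
  congr 1
  ring

end costeq

section compare
variable (μ ν : Measure ℝ) [IsProbabilityMeasure μ] [IsProbabilityMeasure ν]

/-- For any coupling, the first slice set has measure at least `ν (Iic s) - μ (Iio t)`. -/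
lemma coupling_piece (γ : Measure (ℝ × ℝ))
    (hfst : γ.map Prod.fst = μ) (hsnd : γ.map Prod.snd = ν) (s t : ℝ) :
    ν (Iic s) - μ (Iio t) ≤ γ {p : ℝ × ℝ | p.2 ≤ s ∧ t ≤ p.1} := by
  rw [tsub_le_iff_right]
  have h1 : ν (Iic s) = γ {p : ℝ × ℝ | p.2 ≤ s} := by
    rw [← hsnd, Measure.map_apply measurable_snd measurableSet_Iic]; rfl
  have h2 : μ (Iio t) = γ {p : ℝ × ℝ | p.1 < t} := by
    rw [← hfst, Measure.map_apply measurable_fst measurableSet_Iio]; rfl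
  rw [h1, h2]
  refine le_trans (measure_mono (fun p hp => ?_)) (measure_union_le _ _)
  rcases le_or_gt t p.1 with h | h
  · exact Or.inl ⟨hp, h⟩
  · exact Or.inr h

/-- The quantile coupling's first slice is at most `ν (Iic s) - μ (Iio t)`. -/
lemma quantile_piece (hμac : μ ≪ volume) {s t : ℝ} :
    (volume.restrict (Ioo (0:ℝ) 1)) {u : ℝ | quantile ν u ≤ s ∧ t ≤ quantile μ u}
      ≤ ν (Iic s) - μ (Iio t) := by
  rw [Measure.restrict_apply' measurableSet_Ioo]
  have hsub : {u : ℝ | quantile ν u ≤ s ∧ t ≤ quantile μ u} ∩ Ioo 0 1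
      ⊆ Icc (cdf μ t) (cdf ν s) := by
    rintro u ⟨⟨hR, hQ⟩, hu0, hu1⟩
    constructor
    · refine cdf_le_of_forall_lt μ hμac (fun x hx => ?_)
      by_contra hc
      push_neg at hc
      exact absurd ((quantile_le_iff μ hu0 hu1 x).2 hc) (by linarith [lt_of_lt_of_le hx hQ]; )
    · exact (quantile_le_iff ν hu0 hu1 s).1 hR
  calc volume ({u : ℝ | quantile ν u ≤ s ∧ t ≤ quantile μ u} ∩ Ioo 0 1)
      ≤ volume (Icc (cdf μ t) (cdf ν s)) := measure_mono hsub
    _ = ENNReal.ofReal (cdf ν s - cdf μ t) := Real.volume_Icc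
    _ = ENNReal.ofReal (cdf ν s) - ENNReal.ofReal (cdf μ t) :=
        ENNReal.ofReal_sub _ (cdf_nonneg μ t)
    _ = ν (Iic s) - μ (Iio t) := by
        rw [ofReal_cdf, ofReal_cdf]
        congr 1
        have hsing : μ {t} = 0 := hμac (Real.volume_singleton)
        have : Iic t = Iio t ∪ {t} := by ext y; simp [le_iff_lt_or_eq]
        rw [this]
        exact le_antisymm (le_trans (measure_union_le _ _) (by rw [hsing, add_zero]))
          (measure_mono subset_union_left)

end compare

section moments
variable (μ : Measure ℝ) [IsProbabilityMeasure μ]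

lemma lintegral_quantile_sq :
    ∫⁻ u in Ioo (0:ℝ) 1, ENNReal.ofReal ((quantile μ u)^2) = ∫⁻ x, ENNReal.ofReal (x^2) ∂μ := by
  conv_rhs => rw [← map_quantile μ]
  rw [lintegral_map' (f := fun x : ℝ => ENNReal.ofReal (x^2))
    (by fun_prop : Measurable fun x : ℝ => ENNReal.ofReal (x^2)).aemeasurable
    (aemeasurable_quantile μ)]

lemma lintegral_quantile_sq_lt_top (hμ2 : Integrable (fun x : ℝ => x ^ 2) μ) :
    ∫⁻ u in Ioo (0:ℝ) 1, ENNReal.ofReal ((quantile μ u)^2) < ⊤ := by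
  rw [lintegral_quantile_sq μ]
  have h := hμ2.2
  rw [HasFiniteIntegral] at h
  refine lt_of_le_of_lt (le_of_eq (lintegral_congr fun x => ?_)) h
  rw [← Real.enorm_eq_ofReal (sq_nonneg x)]

end moments

section integrab
variable (μ ν : Measure ℝ) [IsProbabilityMeasure μ] [IsProbabilityMeasure ν]

lemma integrable_qdiff_sq (hμ2 : Integrable (fun x : ℝ => x ^ 2) μ)
    (hν2 : Integrable (fun x : ℝ => x ^ 2) ν) :
    Integrable (fun u => (quantile μ u - quantile ν u)^2) (volume.restrict (Ioo (0:ℝ) 1)) := by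
  constructor
  · exact (((aemeasurable_quantile μ).sub (aemeasurable_quantile ν)).pow_const 2).aestronglyMeasurable
  · rw [HasFiniteIntegral]
    have hb : ∀ u : ℝ, (‖(quantile μ u - quantile ν u)^2‖₊ : ℝ≥0∞)
        ≤ 2 * ENNReal.ofReal ((quantile μ u)^2) + 2 * ENNReal.ofReal ((quantile ν u)^2) := by
      intro u
      rw [← Real.enorm_eq_ofReal (sq_nonneg _)]
      calc (‖(quantile μ u - quantile ν u)^2‖₊ : ℝ≥0∞)
          ≤ ENNReal.ofReal (2*(quantile μ u)^2 + 2*(quantile ν u)^2) := by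
            rw [← Real.enorm_eq_ofReal (by positivity)]
            have : (quantile μ u - quantile ν u)^2 ≤ 2*(quantile μ u)^2 + 2*(quantile ν u)^2 := by
              nlinarith [sq_nonneg (quantile μ u + quantile ν u)]
            simp only [enorm_eq_nnnorm, ENNReal.coe_le_coe]
            rw [← Real.toNNReal_eq_nnnorm_of_nonneg (sq_nonneg _),
              ← Real.toNNReal_eq_nnnorm_of_nonneg (by positivity : 
                (0:ℝ) ≤ 2*(quantile μ u)^2 + 2*(quantile ν u)^2)]
            exact Real.toNNReal_le_toNNReal this
        _ = 2 * ENNReal.ofReal ((quantile μ u)^2) + 2 * ENNReal.ofReal ((quantile ν u)^2) := by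
            rw [ENNReal.ofReal_add (by positivity) (by positivity), ENNReal.ofReal_mul (by norm_num),
              ENNReal.ofReal_mul (by norm_num)]
            norm_num
      rw [← Real.enorm_eq_ofReal (sq_nonneg _)]
    refine lt_of_le_of_lt (lintegral_mono (fun u => le_trans (hb u) (le_refl _))) ?_
    have haμ : AEMeasurable (fun u => ENNReal.ofReal ((quantile μ u)^2))
        (volume.restrict (Ioo (0:ℝ) 1)) :=
      ENNReal.measurable_ofReal.comp_aemeasurable ((aemeasurable_quantile μ).pow_const 2)
    have haν : AEMeasurable (fun u => ENNReal.ofReal ((quantile ν u)^2))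
        (volume.restrict (Ioo (0:ℝ) 1)) :=
      ENNReal.measurable_ofReal.comp_aemeasurable ((aemeasurable_quantile ν).pow_const 2)
    rw [lintegral_add_left' (haμ.const_mul 2)]
    have hμf := lintegral_quantile_sq_lt_top μ hμ2
    have hνf := lintegral_quantile_sq_lt_top ν hν2
    rw [lintegral_const_mul'' 2 haμ, lintegral_const_mul'' 2 haν]
    exact ENNReal.add_lt_top.2 ⟨ENNReal.mul_lt_top (by norm_num) hμf,
      ENNReal.mul_lt_top (by norm_num) hνf⟩

end integrab

/-- for absolutely continuous probability measures on ℝ with finite second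
moments, the squared 2-Wasserstein distance equals the integral of the squared difference
of quantile functions over (0,1). -/
theorem w2sq_eq_integral_quantile_diff_sq
    (μ ν : Measure ℝ) [IsProbabilityMeasure μ] [IsProbabilityMeasure ν]
    (hμac : μ ≪ volume) (hνac : ν ≪ volume)
    (hμ2 : Integrable (fun x : ℝ => x ^ 2) μ)
    (hν2 : Integrable (fun x : ℝ => x ^ 2) ν) :
    W2sq μ ν =
      ENNReal.ofReal (∫ t in Set.Ioo (0 : ℝ) 1, (quantile μ t - quantile ν t) ^ 2) := by
  have hQm := aemeasurable_quantile μ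
  have hRm := aemeasurable_quantile ν
  have hpair : AEMeasurable (fun u => (quantile μ u, quantile ν u))
      (volume.restrict (Ioo (0:ℝ) 1)) := hQm.prodMk hRm
  set γ₀ : Measure (ℝ × ℝ) :=
    (volume.restrict (Ioo (0:ℝ) 1)).map (fun u => (quantile μ u, quantile ν u)) with hγ₀
  have hfst : γ₀.map Prod.fst = μ := by
    rw [hγ₀, AEMeasurable.map_map_of_aemeasurable measurable_fst.aemeasurable hpair]
    exact map_quantile μ
  have hsnd : γ₀.map Prod.snd = ν := by
    rw [hγ₀, AEMeasurable.map_map_of_aemeasurable measurable_snd.aemeasurable hpair]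
    exact map_quantile ν
  haveI hγ₀fin : IsFiniteMeasure γ₀ := by
    constructor
    rw [hγ₀, Measure.map_apply_of_aemeasurable hpair MeasurableSet.univ]
    simp [Real.volume_Ioo]
  have hcostmeas : Measurable fun p : ℝ × ℝ => ENNReal.ofReal ((p.1 - p.2) ^ 2) := by fun_prop
  have hcost₀ : ∫⁻ p : ℝ × ℝ, ENNReal.ofReal ((p.1 - p.2) ^ 2) ∂γ₀ =
      ENNReal.ofReal (∫ t in Set.Ioo (0 : ℝ) 1, (quantile μ t - quantile ν t) ^ 2) := by
    rw [hγ₀, lintegral_map' hcostmeas.aemeasurable hpair,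
      ← ofReal_integral_eq_lintegral_ofReal (integrable_qdiff_sq μ ν hμ2 hν2)
        (ae_of_all _ fun u => sq_nonneg _)]
  have hslices : ∀ (γ : Measure (ℝ × ℝ)), γ.map Prod.fst = μ → γ.map Prod.snd = ν →
      ∀ q : ℝ × ℝ, slices γ₀ q ≤ slices γ q := by
    intro γ hf hs q
    rcases lt_or_ge q.1 q.2 with hst | hst
    · have hm1 : MeasurableSet {p : ℝ × ℝ | p.2 ≤ q.1 ∧ q.2 ≤ p.1} :=
        (measurableSet_le measurable_snd measurable_const).inter
          (measurableSet_le measurable_const measurable_fst)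
      have hm2 : MeasurableSet {p : ℝ × ℝ | p.1 ≤ q.1 ∧ q.2 ≤ p.2} :=
        (measurableSet_le measurable_fst measurable_const).inter
          (measurableSet_le measurable_const measurable_snd)
      have e1 : ∀ (δ : Measure (ℝ × ℝ)), δ {p : ℝ × ℝ | p.2 ≤ q.1 ∧ q.1 < q.2 ∧ q.2 ≤ p.1}
          = δ {p : ℝ × ℝ | p.2 ≤ q.1 ∧ q.2 ≤ p.1} := by
        intro δ; congr 1; ext p; simp [hst]
      have e2 : ∀ (δ : Measure (ℝ × ℝ)), δ {p : ℝ × ℝ | p.1 ≤ q.1 ∧ q.1 < q.2 ∧ q.2 ≤ p.2}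
          = δ {p : ℝ × ℝ | p.1 ≤ q.1 ∧ q.2 ≤ p.2} := by
        intro δ; congr 1; ext p; simp [hst]
      unfold slices
      rw [e1 γ₀, e2 γ₀, e1 γ, e2 γ]
      have h1 : γ₀ {p : ℝ × ℝ | p.2 ≤ q.1 ∧ q.2 ≤ p.1} ≤ γ {p : ℝ × ℝ | p.2 ≤ q.1 ∧ q.2 ≤ p.1} := by
        rw [hγ₀, Measure.map_apply_of_aemeasurable hpair hm1]
        refine le_trans (le_trans (le_of_eq rfl) (quantile_piece μ ν hμac)) ?_
        exact coupling_piece μ ν γ hf hs q.1 q.2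
      have h2 : γ₀ {p : ℝ × ℝ | p.1 ≤ q.1 ∧ q.2 ≤ p.2} ≤ γ {p : ℝ × ℝ | p.1 ≤ q.1 ∧ q.2 ≤ p.2} := by
        rw [hγ₀, Measure.map_apply_of_aemeasurable hpair hm2]
        refine le_trans (le_trans (le_of_eq rfl) (quantile_piece ν μ hνac)) ?_
        have hswap : (γ.map Prod.swap).map Prod.fst = ν := by
          rw [Measure.map_map measurable_fst measurable_swap]
          exact hs
        have hswap2 : (γ.map Prod.swap).map Prod.snd = μ := by
          rw [Measure.map_map measurable_snd measurable_swap]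
          exact hf
        have := coupling_piece ν μ (γ.map Prod.swap) hswap hswap2 q.1 q.2
        rwa [Measure.map_apply measurable_swap hm1,
          show Prod.swap ⁻¹' {p : ℝ × ℝ | p.2 ≤ q.1 ∧ q.2 ≤ p.1}
            = {p : ℝ × ℝ | p.1 ≤ q.1 ∧ q.2 ≤ p.2} from rfl] at this
      exact add_le_add h1 h2
    · have e1 : {p : ℝ × ℝ | p.2 ≤ q.1 ∧ q.1 < q.2 ∧ q.2 ≤ p.1} = (∅ : Set (ℝ × ℝ)) := by
        ext p; simp only [mem_setOf_eq, mem_empty_iff_false, iff_false]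
        rintro ⟨-, h, -⟩; exact absurd h (not_lt.2 hst)
      have e2 : {p : ℝ × ℝ | p.1 ≤ q.1 ∧ q.1 < q.2 ∧ q.2 ≤ p.2} = (∅ : Set (ℝ × ℝ)) := by
        ext p; simp only [mem_setOf_eq, mem_empty_iff_false, iff_false]
        rintro ⟨-, h, -⟩; exact absurd h (not_lt.2 hst)
      unfold slices
      rw [e1, e2, measure_empty, add_zero]
      exact zero_le
  apply le_antisymm
  · exact le_trans (iInf₂_le γ₀ ⟨hfst, hsnd⟩) (le_of_eq hcost₀)
  · refine le_iInf₂ fun γ hγ => ?_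
    haveI : IsFiniteMeasure γ := by
      constructor
      have huniv : γ Set.univ = μ Set.univ := by
        rw [← hγ.1, Measure.map_apply measurable_fst MeasurableSet.univ, preimage_univ]
      rw [huniv, measure_univ]
      exact ENNReal.one_lt_top
    rw [← hcost₀, cost_eq γ₀, cost_eq γ]
    exact mul_le_mul_right (lintegral_mono (hslices γ hγ.1 hγ.2)) 2
end

section
/- The squared 2-Wasserstein distance between two univariate Gaussian measures N(m, σ²) and N(n, η²) equals (m − n)² + (σ − η)². -/
open MeasureTheory ProbabilityTheory

open Real Set Filter
open scoped ENNReal NNReal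

namespace W2Aux

noncomputable def G : Measure ℝ := gaussianReal 0 1

noncomputable def Φ : ℝ → ℝ := fun x => cdf G x

noncomputable def Q : ℝ → ℝ := quantile G

instance : IsProbabilityMeasure G := by rw [G]; infer_instance

lemma G_pos_of (s : Set ℝ) (hs : MeasurableSet s) (hvs : volume s ≠ 0) : G s ≠ 0 := by
  intro h
  rw [G, gaussianReal_apply 0 one_ne_zero s] at h
  rw [lintegral_eq_zero_iff (measurable_gaussianPDF 0 1)] at h
  have h' : ∀ᵐ x ∂(volume.restrict s), False :=
    h.mono fun x hx => (gaussianPDF_pos 0 one_ne_zero x).ne' hx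
  rw [ae_iff] at h'
  simp only [not_false_eq_true, setOf_true, Measure.restrict_apply_univ] at h'
  exact hvs h'

lemma Φ_pos (x : ℝ) : 0 < Φ x := by
  have h1 : G (Iic x) ≠ 0 := G_pos_of _ measurableSet_Iic (by simp)
  rw [Φ, cdf_eq_real, measureReal_def]
  exact ENNReal.toReal_pos h1 (measure_ne_top _ _)

lemma Φ_lt_one (x : ℝ) : Φ x < 1 := by
  have h1 : G (Ioi x) ≠ 0 := G_pos_of _ measurableSet_Ioi (by simp)
  rw [Φ, cdf_eq_real, measureReal_def]
  by_contra h
  push_neg at h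
  have h2 : (1:ℝ≥0∞) ≤ G (Iic x) := by
    rw [← ENNReal.ofReal_one]
    exact ENNReal.ofReal_le_of_le_toReal h
  have h3 : G (Iic x) = 1 := le_antisymm prob_le_one h2
  have h4 := measure_compl (measurableSet_Iic (a := x)) (measure_ne_top G _)
  rw [compl_Iic, h3, measure_univ, tsub_self] at h4
  exact h1 h4

end W2Aux

namespace W2Aux

lemma S_nonempty {t : ℝ} (ht : t < 1) : {x : ℝ | t ≤ Φ x}.Nonempty := by
  have h := (tendsto_cdf_atTop (μ := G)).eventually (lt_mem_nhds ht)
  obtain ⟨x, hx⟩ := h.exists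
  exact ⟨x, hx.le⟩

lemma S_bddBelow {t : ℝ} (ht : 0 < t) : BddBelow {x : ℝ | t ≤ Φ x} := by
  have h := (tendsto_cdf_atBot (μ := G)).eventually (gt_mem_nhds ht)
  rw [eventually_atBot] at h
  obtain ⟨y, hy⟩ := h
  refine ⟨y, fun z hz => ?_⟩
  by_contra hzy
  push_neg at hzy
  exact absurd hz (not_le.2 (hy z hzy.le))

lemma le_Φ_Q {t : ℝ} (ht : 0 < t) (ht1 : t < 1) : t ≤ Φ (Q t) := by
  have hne := S_nonempty ht1
  have hcont : ContinuousWithinAt Φ (Ioi (Q t)) (Q t) :=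
    ((cdf G).right_continuous (Q t)).mono Ioi_subset_Ici_self
  refine ge_of_tendsto hcont ?_
  refine eventually_nhdsWithin_of_forall fun x hx => ?_
  obtain ⟨s, hs, hsx⟩ := exists_lt_of_csInf_lt hne hx
  exact hs.trans (monotone_cdf _ hsx.le)

lemma Q_le_iff {t : ℝ} (ht : 0 < t) (ht1 : t < 1) (x : ℝ) : Q t ≤ x ↔ t ≤ Φ x := by
  constructor
  · intro h
    exact (le_Φ_Q ht ht1).trans (monotone_cdf _ h)
  · intro h
    exact csInf_le (S_bddBelow ht) h

lemma Q_monotoneOn : MonotoneOn Q (Ioo (0:ℝ) 1) := by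
  intro a ha b hb hab
  exact le_csInf (S_nonempty hb.2) fun x hx =>
    csInf_le (S_bddBelow ha.1) (le_trans hab hx)

end W2Aux

namespace W2Aux

lemma Q_aemeasurable : AEMeasurable Q (volume.restrict (Ioo (0:ℝ) 1)) :=
  aemeasurable_restrict_of_monotoneOn measurableSet_Ioo Q_monotoneOn

instance : IsProbabilityMeasure (volume.restrict (Ioo (0:ℝ) 1)) :=
  ⟨by rw [Measure.restrict_apply_univ, Real.volume_Ioo]; norm_num⟩

lemma map_Q : Measure.map Q (volume.restrict (Ioo (0:ℝ) 1)) = G := by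
  have : IsProbabilityMeasure (Measure.map Q (volume.restrict (Ioo (0:ℝ) 1))) :=
    Measure.isProbabilityMeasure_map Q_aemeasurable
  refine Measure.ext_of_Iic _ _ fun x => ?_
  rw [Measure.map_apply_of_aemeasurable Q_aemeasurable measurableSet_Iic,
    Measure.restrict_apply' measurableSet_Ioo]
  have hset : Q ⁻¹' Iic x ∩ Ioo 0 1 = Ioc 0 (Φ x) := by
    ext t
    simp only [mem_inter_iff, mem_preimage, mem_Iic, mem_Ioo, mem_Ioc]
    constructor
    · rintro ⟨hQ, ht0, ht1⟩
      exact ⟨ht0, (Q_le_iff ht0 ht1 x).1 hQ⟩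
    · rintro ⟨ht0, htΦ⟩
      have ht1 : t < 1 := lt_of_le_of_lt htΦ (Φ_lt_one x)
      exact ⟨(Q_le_iff ht0 ht1 x).2 htΦ, ht0, ht1⟩
  rw [hset, Real.volume_Ioc, sub_zero, Φ, ofReal_cdf]

end W2Aux

namespace W2Aux

lemma gauss_eq_map {m σ : ℝ} (hσ : 0 < σ) :
    gaussianReal m (Real.toNNReal (σ^2)) = Measure.map (fun y => σ * y + m) G := by
  have hV : Real.toNNReal (σ^2) = NNReal.mk (σ^2) (sq_nonneg σ) * 1 := by
    rw [mul_one]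
    ext
    simp [Real.coe_toNNReal _ (sq_nonneg σ)]
  have h1 : Measure.map (σ * ·) G = gaussianReal 0 (NNReal.mk (σ^2) (sq_nonneg σ) * 1) := by
    rw [G, gaussianReal_map_const_mul σ, mul_zero]
  have h2 : (fun y => σ * y + m) = (· + m) ∘ (σ * ·) := rfl
  rw [h2, ← Measure.map_map (measurable_add_const m) (measurable_const_mul σ), h1,
    gaussianReal_map_add_const m, zero_add, hV]

lemma cdf_gauss {m σ : ℝ} (hσ : 0 < σ) (x : ℝ) :
    cdf (gaussianReal m (Real.toNNReal (σ^2))) x = Φ ((x - m) / σ) := by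
  have hIic : (fun y => σ * y + m) ⁻¹' Iic x = Iic ((x - m) / σ) := by
    ext y
    simp only [mem_preimage, mem_Iic, le_div_iff₀ hσ]
    constructor <;> intro h <;> nlinarith
  have : IsProbabilityMeasure (gaussianReal m (Real.toNNReal (σ^2))) := by infer_instance
  rw [cdf_eq_real, measureReal_def, gauss_eq_map hσ,
    Measure.map_apply (by fun_prop) measurableSet_Iic, hIic, Φ, cdf_eq_real, measureReal_def]

lemma quantile_gauss {m σ : ℝ} (hσ : 0 ≤ σ) {t : ℝ} (ht : t ∈ Ioo (0:ℝ) 1) :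
    quantile (gaussianReal m (Real.toNNReal (σ^2))) t = m + σ * Q t := by
  rcases eq_or_lt_of_le hσ with h0 | h0
  · subst h0
    have hv : Real.toNNReal ((0:ℝ)^2) = 0 := by simp
    rw [hv, gaussianReal_zero_var, zero_mul, add_zero]
    have hP : IsProbabilityMeasure (Measure.dirac m) := by infer_instance
    have hcdf : ∀ x, cdf (Measure.dirac m) x = if m ≤ x then 1 else 0 := by
      intro x
      rw [cdf_eq_real, measureReal_def, Measure.dirac_apply' m measurableSet_Iic]
      by_cases h : m ≤ x <;> simp [indicator, h]
    have hS : {x : ℝ | t ≤ cdf (Measure.dirac m) x} = Ici m := by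
      ext x
      simp only [mem_setOf_eq, hcdf x, mem_Ici]
      by_cases h : m ≤ x <;> simp [h, ht.2.le, ht.1.not_ge]
    rw [quantile, hS, csInf_Ici]
  · have hS : {x : ℝ | t ≤ cdf (gaussianReal m (Real.toNNReal (σ^2))) x}
        = Ici (m + σ * Q t) := by
      ext x
      rw [mem_setOf_eq, cdf_gauss h0 x, mem_Ici, ← Q_le_iff ht.1 ht.2, le_div_iff₀ h0]
      constructor <;> intro h <;> nlinarith
    rw [quantile, hS, csInf_Ici]

end W2Aux

namespace W2Aux

lemma integral_G (g : ℝ → ℝ) :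
    ∫ x, g x ∂G = ∫ x, gaussianPDFReal 0 1 x * g x := by
  rw [G, gaussianReal_of_var_ne_zero 0 one_ne_zero]
  have h1 : gaussianPDF 0 1 = fun x => ((gaussianPDFReal 0 1 x).toNNReal : ℝ≥0∞) := rfl
  rw [h1, integral_withDensity_eq_integral_smul
    ((measurable_gaussianPDFReal 0 1).real_toNNReal) g]
  congr 1
  ext x
  rw [NNReal.smul_def, smul_eq_mul, Real.coe_toNNReal _ (gaussianPDFReal_nonneg 0 1 x)]

lemma pdf_eq : gaussianPDFReal 0 1 = fun x => (√(2*π))⁻¹ * rexp (-(2⁻¹) * x^2) := by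
  ext x
  rw [gaussianPDFReal]
  push_cast
  rw [mul_one]
  congr 1
  ring_nf

end W2Aux

namespace W2Aux

lemma int_f1 : Integrable fun x : ℝ => x * rexp (-(2⁻¹:ℝ) * x^2) := by
  have := integrable_mul_exp_neg_mul_sq (b := (2⁻¹:ℝ)) (by norm_num)
  simpa using this

lemma int_f2 : Integrable fun x : ℝ => x^2 * rexp (-(2⁻¹:ℝ) * x^2) := by
  have := integrable_rpow_mul_exp_neg_mul_sq (b := (2⁻¹:ℝ)) (by norm_num)
    (s := (2:ℝ)) (by norm_num)
  simpa [Real.rpow_two] using this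

lemma I1 : ∫ x : ℝ, x * rexp (-(2⁻¹:ℝ) * x^2) = 0 := by
  have h1 := integral_comp_neg_Iic (0:ℝ) (fun x => x * rexp (-(2⁻¹:ℝ) * x^2))
  simp only [neg_zero] at h1
  have h1' : (∫ x in Iic (0:ℝ), x * rexp (-(2⁻¹:ℝ) * x^2))
      = - ∫ x in Ioi (0:ℝ), x * rexp (-(2⁻¹:ℝ) * x^2) := by
    rw [← h1, ← integral_neg]
    congr 1
    ext x
    simp only [neg_neg, neg_mul, neg_sq]
  rw [← intervalIntegral.integral_Iic_add_Ioi (b := (0:ℝ))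
    int_f1.integrableOn int_f1.integrableOn, h1']
  ring

lemma I2 : ∫ x : ℝ, x^2 * rexp (-(2⁻¹:ℝ) * x^2) = √(2*π) := by
  have h1 := integral_comp_neg_Iic (0:ℝ) (fun x => x^2 * rexp (-(2⁻¹:ℝ) * x^2))
  simp only [neg_zero, neg_sq] at h1
  have h4 : ∫ x in Ioi (0:ℝ), x^2 * rexp (-(2⁻¹:ℝ) * x^2) = √(2*π) / 2 := by
    have h5 := integral_rpow_mul_exp_neg_mul_rpow (p := 2) (q := 2) (b := (2⁻¹:ℝ))
      (by norm_num) (by norm_num) (by norm_num)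
    rw [show ∫ x in Ioi (0:ℝ), x^2 * rexp (-(2⁻¹:ℝ) * x ^ 2)
        = ∫ x in Ioi (0:ℝ), x ^ (2:ℝ) * rexp (-(2⁻¹:ℝ) * x ^ (2:ℝ)) by
      refine setIntegral_congr_fun measurableSet_Ioi fun x hx => ?_
      rw [Real.rpow_two], h5]
    have hG : Real.Gamma ((2+1)/2) = √π / 2 := by
      rw [show ((2+1)/2 : ℝ) = 1/2 + 1 by norm_num,
        Real.Gamma_add_one (by norm_num), Real.Gamma_one_half_eq]
      ring
    rw [hG, show ((2⁻¹:ℝ) ^ (-(2+1)/2 : ℝ)) = 2 ^ ((3:ℝ)/2) by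
      rw [show (2⁻¹:ℝ) = 2 ^ (-1:ℝ) by rw [Real.rpow_neg_one],
        ← Real.rpow_mul (by norm_num : (0:ℝ) ≤ 2)]
      norm_num]
    rw [show ((3:ℝ)/2) = 1 + 1/2 by norm_num, Real.rpow_add (by norm_num) , Real.rpow_one,
      ← Real.sqrt_eq_rpow, Real.sqrt_mul (by norm_num : (0:ℝ) ≤ 2) π]
    ring
  rw [← intervalIntegral.integral_Iic_add_Ioi (b := (0:ℝ))
    int_f2.integrableOn int_f2.integrableOn, h1, h4]
  ring

end W2Aux

namespace W2Aux

lemma int_pdf_mul : Integrable fun x => gaussianPDFReal 0 1 x * x := by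
  have h : (fun x => gaussianPDFReal 0 1 x * x)
      = fun x => (√(2*π))⁻¹ * (x * rexp (-(2⁻¹:ℝ) * x^2)) := by
    rw [pdf_eq]; ext x; ring
  rw [h]
  exact int_f1.const_mul _

lemma int_pdf_sq : Integrable fun x => gaussianPDFReal 0 1 x * x^2 := by
  have h : (fun x => gaussianPDFReal 0 1 x * x^2)
      = fun x => (√(2*π))⁻¹ * (x^2 * rexp (-(2⁻¹:ℝ) * x^2)) := by
    rw [pdf_eq]; ext x; ring
  rw [h]
  exact int_f2.const_mul _

lemma sqrt_two_pi_ne : √(2*π) ≠ 0 :=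
  (Real.sqrt_pos.2 (by positivity)).ne'

lemma M1 : ∫ x, gaussianPDFReal 0 1 x * x = 0 := by
  have h : (fun x => gaussianPDFReal 0 1 x * x)
      = fun x => (√(2*π))⁻¹ * (x * rexp (-(2⁻¹:ℝ) * x^2)) := by
    rw [pdf_eq]; ext x; ring
  rw [h, integral_const_mul, I1, mul_zero]

lemma M2 : ∫ x, gaussianPDFReal 0 1 x * x^2 = 1 := by
  have h : (fun x => gaussianPDFReal 0 1 x * x^2)
      = fun x => (√(2*π))⁻¹ * (x^2 * rexp (-(2⁻¹:ℝ) * x^2)) := by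
    rw [pdf_eq]; ext x; ring
  rw [h, integral_const_mul, I2, inv_mul_cancel₀ sqrt_two_pi_ne]

lemma integral_sq (a b : ℝ) : ∫ x, (a + b*x)^2 ∂G = a^2 + b^2 := by
  rw [integral_G]
  have hexp : (fun x => gaussianPDFReal 0 1 x * (a + b*x)^2)
      = fun x => a^2 * gaussianPDFReal 0 1 x
        + ((2*a*b) * (gaussianPDFReal 0 1 x * x) + b^2 * (gaussianPDFReal 0 1 x * x^2)) := by
    ext x; ring
  have hg : Integrable (fun x =>
      2*a*b * (gaussianPDFReal 0 1 x * x) + b^2 * (gaussianPDFReal 0 1 x * x^2)) :=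
    (int_pdf_mul.const_mul _).add (int_pdf_sq.const_mul _)
  rw [hexp, integral_add ((integrable_gaussianPDFReal 0 1).const_mul _) hg,
    integral_add (int_pdf_mul.const_mul _) (int_pdf_sq.const_mul _),
    integral_const_mul, integral_const_mul, integral_const_mul,
    integral_gaussianPDFReal_eq_one 0 one_ne_zero, M1, M2]
  ring

end W2Aux

open W2Aux in
/-- the squared 2-Wasserstein distance between N(m,σ²) and N(n,η²),
computed as the integral over (0,1) of the squared difference of quantile functions,
equals (m - n)² + (σ - η)². -/
theorem w2sq_gaussian (m n σ η : ℝ) (hσ : 0 ≤ σ) (hη : 0 ≤ η) :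
    ∫ t in Set.Ioo (0 : ℝ) 1,
        (quantile (gaussianReal m (Real.toNNReal (σ ^ 2))) t -
         quantile (gaussianReal n (Real.toNNReal (η ^ 2))) t) ^ 2
      = (m - n) ^ 2 + (σ - η) ^ 2 := by
  have hcong : ∀ t ∈ Ioo (0:ℝ) 1,
      (quantile (gaussianReal m (Real.toNNReal (σ ^ 2))) t -
        quantile (gaussianReal n (Real.toNNReal (η ^ 2))) t) ^ 2
      = ((m-n) + (σ-η) * Q t)^2 := fun t ht => by
    rw [quantile_gauss hσ ht, quantile_gauss hη ht]; ring
  rw [setIntegral_congr_fun measurableSet_Ioo hcong]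
  have h2 : ∫ t in Ioo (0:ℝ) 1, ((m-n) + (σ-η) * Q t)^2
      = ∫ x, ((m-n) + (σ-η)*x)^2 ∂G := by
    rw [← map_Q, integral_map Q_aemeasurable]
    exact ((continuous_const.add (continuous_const.mul continuous_id)).pow 2).aestronglyMeasurable
  rw [h2, integral_sq]
end

section
/- For univariate Gaussian measures, the Wasserstein covariance between predictor processes μ_j = N(m_j, σ_j²) and μ_k = N(m_k, σ_k²) (with barycenters N(m̄_j, σ̄_j²), N(m̄_k, σ̄_k²)) evaluated via the tangent space at a Gaussian ν̄ = N(n̄, η̄²) equals E[(m_j − m̄_j)(m_k − m̄_k) + (σ_j − σ̄_j)(σ_k − σ̄_k)]. -/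
open MeasureTheory ProbabilityTheory Real Set
open scoped ENNReal NNReal

lemma odd_gauss_int {b : ℝ} : ∫ x : ℝ, x * Real.exp (-b * x ^ 2) = 0 := by
  have h := integral_neg_eq_self (fun x : ℝ => x * Real.exp (-b * x ^ 2)) volume
  simp only [neg_sq, neg_mul] at h
  rw [integral_neg] at h
  simp only [neg_mul]
  linarith

lemma sq_gauss_int {b : ℝ} (hb : 0 < b) :
    ∫ x : ℝ, x ^ 2 * Real.exp (-b * x ^ 2) = Real.sqrt (π / b) / (2 * b) := by
  have key : ∫ x in Ioi (0:ℝ), x ^ (2:ℝ) * Real.exp (-b * x ^ (2:ℝ)) =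
      b ^ (-((2:ℝ) + 1) / 2) * (1 / 2) * Real.Gamma (((2:ℝ) + 1) / 2) :=
    integral_rpow_mul_exp_neg_mul_rpow two_pos (by norm_num) hb
  have hpow : ∀ x : ℝ, x ^ (2:ℝ) = x ^ (2:ℕ) := fun x => by
    rw [show (2:ℝ) = ((2:ℕ):ℝ) by norm_num, Real.rpow_natCast]
  simp only [hpow] at key
  have hG : Real.Gamma (((2:ℝ) + 1) / 2) = Real.sqrt π / 2 := by
    rw [show ((2:ℝ) + 1) / 2 = 1/2 + 1 by norm_num, Real.Gamma_add_one (by norm_num),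
      Real.Gamma_one_half_eq]
    ring
  have habs : (fun x : ℝ => x ^ 2 * Real.exp (-b * x ^ 2)) =
      fun x : ℝ => |x| ^ 2 * Real.exp (-b * |x| ^ 2) := by
    funext x; rw [sq_abs]
  calc ∫ x : ℝ, x ^ 2 * Real.exp (-b * x ^ 2)
      = ∫ x : ℝ, |x| ^ 2 * Real.exp (-b * |x| ^ 2) := by rw [← habs]
    _ = 2 * ∫ x in Ioi (0:ℝ), x ^ 2 * Real.exp (-b * x ^ 2) :=
        integral_comp_abs (f := fun x : ℝ => x ^ 2 * Real.exp (-b * x ^ 2))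
    _ = Real.sqrt (π / b) / (2 * b) := by
        rw [key, hG]
        have h32 : b ^ (-((2:ℝ) + 1) / 2) = (Real.sqrt b)⁻¹ * b⁻¹ := by
          rw [show -((2:ℝ) + 1) / 2 = -(1/2) + (-1) by norm_num, Real.rpow_add hb,
            Real.rpow_neg hb.le, Real.rpow_neg_one, ← Real.sqrt_eq_rpow]
        have hsb : Real.sqrt b ≠ 0 := by positivity
        rw [h32, Real.sqrt_div pi_pos.le]
        field_simp

set_option maxHeartbeats 1000000 in
lemma gauss_inner {nb ηb : ℝ} (hηb : 0 < ηb) (a c e d : ℝ) :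
    ∫ x, ((x - nb) * a / ηb + e) * ((x - nb) * c / ηb + d)
      ∂(gaussianReal nb (Real.toNNReal (ηb ^ 2))) = e * d + a * c := by
  set v : ℝ≥0 := Real.toNNReal (ηb ^ 2) with hvdef
  have hV : (v : ℝ) = ηb ^ 2 := Real.coe_toNNReal _ (sq_nonneg _)
  have hVpos : (0:ℝ) < (v:ℝ) := by rw [hV]; positivity
  have hvne : v ≠ 0 := by
    intro h
    rw [h] at hVpos
    simp at hVpos
  set b : ℝ := (2 * (v:ℝ))⁻¹ with hbdef
  have hb : 0 < b := by positivity
  set K : ℝ := (Real.sqrt (2 * π * (v:ℝ)))⁻¹ with hKdef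
  rw [gaussianReal_of_var_ne_zero _ hvne]
  have hpdf : gaussianPDF nb v = fun x => ((Real.toNNReal (gaussianPDFReal nb v x)) : ℝ≥0∞) :=
    rfl
  rw [hpdf, integral_withDensity_eq_integral_smul
    ((measurable_gaussianPDFReal nb v).real_toNNReal)]
  have hpdfR : ∀ x : ℝ, gaussianPDFReal nb v x = K * Real.exp (-b * (x - nb) ^ 2) := by
    intro x
    rw [hKdef, hbdef]
    simp only [gaussianPDFReal]
    rw [mul_eq_mul_left_iff]
    left
    rw [Real.exp_eq_exp]
    ring
  have hsmul : ∀ x : ℝ, (Real.toNNReal (gaussianPDFReal nb v x)) •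
      (((x - nb) * a / ηb + e) * ((x - nb) * c / ηb + d)) =
      K * Real.exp (-b * (x - nb) ^ 2) *
        (((x - nb) * a / ηb + e) * ((x - nb) * c / ηb + d)) := by
    intro x
    rw [NNReal.smul_def, smul_eq_mul, Real.coe_toNNReal _ (gaussianPDFReal_nonneg _ _ _),
      hpdfR x]
  simp_rw [hsmul]
  have hshift := integral_sub_right_eq_self (μ := volume)
    (fun y => K * Real.exp (-b * y ^ 2) * ((y * a / ηb + e) * (y * c / ηb + d))) nb
  rw [hshift]
  have hexpand : (fun y : ℝ => K * Real.exp (-b * y ^ 2) * ((y * a / ηb + e) * (y * c / ηb + d)))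
      = fun y : ℝ => (K * (a * c) / ηb ^ 2) * (y ^ 2 * Real.exp (-b * y ^ 2))
        + ((K * (a * d + e * c) / ηb) * (y * Real.exp (-b * y ^ 2))
        + (K * (e * d)) * Real.exp (-b * y ^ 2)) := by
    funext y
    field_simp
    ring
  rw [hexpand]
  have hpow2 : ∀ x : ℝ, x ^ (2:ℝ) = x ^ (2:ℕ) := fun x => by
    rw [show (2:ℝ) = ((2:ℕ):ℝ) by norm_num, Real.rpow_natCast]
  have I2 : Integrable (fun y : ℝ => y ^ 2 * Real.exp (-b * y ^ 2)) := by
    have h := integrable_rpow_mul_exp_neg_mul_sq hb (s := (2:ℝ)) (by norm_num)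
    simpa [hpow2] using h
  have I1 : Integrable (fun y : ℝ => y * Real.exp (-b * y ^ 2)) :=
    integrable_mul_exp_neg_mul_sq hb
  have I0 : Integrable (fun y : ℝ => Real.exp (-b * y ^ 2)) :=
    integrable_exp_neg_mul_sq hb
  have Ia : Integrable (fun y : ℝ => K * (a * c) / ηb ^ 2 * (y ^ 2 * Real.exp (-b * y ^ 2))) :=
    I2.const_mul _
  have Ib : Integrable (fun y : ℝ => K * (a * d + e * c) / ηb * (y * Real.exp (-b * y ^ 2))) :=
    I1.const_mul _
  have Ic : Integrable (fun y : ℝ => K * (e * d) * Real.exp (-b * y ^ 2)) :=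
    I0.const_mul _
  have Ibc : Integrable (fun y : ℝ => K * (a * d + e * c) / ηb * (y * Real.exp (-b * y ^ 2))
      + K * (e * d) * Real.exp (-b * y ^ 2)) := Ib.add Ic
  rw [integral_add Ia Ibc, integral_add Ib Ic,
    integral_const_mul, integral_const_mul, integral_const_mul,
    sq_gauss_int hb, odd_gauss_int, integral_gaussian]
  have hπb : π / b = 2 * π * (v:ℝ) := by
    rw [hbdef]
    field_simp
  have hsqrt_pos : 0 < Real.sqrt (2 * π * (v:ℝ)) := by
    apply Real.sqrt_pos.mpr
    positivity
  have hKs : K * Real.sqrt (2 * π * (v:ℝ)) = 1 := by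
    rw [hKdef]
    field_simp
  have h2b : 2 * b = ((v:ℝ))⁻¹ := by rw [hbdef]; field_simp
  rw [hπb, h2b, mul_zero, zero_add, hKdef, hV]
  have hs0 : Real.sqrt (2 * π * ηb ^ 2) ≠ 0 := by positivity
  field_simp
  ring

/-- for univariate Gaussian predictor processes `μ_j = N(m_j, σ_j²)` and
`μ_k = N(m_k, σ_k²)` with barycenters `N(m̄_j, σ̄_j²)`, `N(m̄_k, σ̄_k²)`, the Wasserstein
covariance evaluated via the tangent space at a Gaussian `ν̄ = N(n̄, η̄²)` equals
`E[(m_j − m̄_j)(m_k − m̄_k) + (σ_j − σ̄_j)(σ_k − σ̄_k)]`. Here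
`T_{μ_j‖ν̄}(x) − x = (x − n̄)(σ_j − σ̄_j)/η̄ + (m_j − m̄_j)`. -/
theorem gauss_wasserstein_covariance
    {Ω : Type*} [MeasurableSpace Ω] (P : Measure Ω) [IsProbabilityMeasure P]
    (mj mk σj σk : Ω → ℝ) (mbj mbk sbj sbk nb ηb : ℝ) (hηb : 0 < ηb)
    (h1 : Integrable (fun ω => (mj ω - mbj) * (mk ω - mbk)) P)
    (h2 : Integrable (fun ω => (σj ω - sbj) * (σk ω - sbk)) P) :
    ∫ ω,
        (∫ x, ((x - nb) * (σj ω - sbj) / ηb + (mj ω - mbj)) *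
            ((x - nb) * (σk ω - sbk) / ηb + (mk ω - mbk))
          ∂(gaussianReal nb (Real.toNNReal (ηb ^ 2)))) ∂P =
      ∫ ω, ((mj ω - mbj) * (mk ω - mbk) + (σj ω - sbj) * (σk ω - sbk)) ∂P := by
  refine integral_congr_ae (Filter.Eventually.of_forall fun ω => ?_)
  exact gauss_inner hηb _ _ _ _
end
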